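/- Every perfect 2-coloring of the infinite circulant graph Ci_∞(D_n) with distance set D_n = {±1, ±3, ..., ±(2n-1)} is periodic: there exists a positive integer t such that φ(i) = φ(i+t) for all integers i. -/

import Mathlib

/-- Neighborhood of `i` in the infinite circulant graph `Ci_∞(D_n)`. -/
noncomputable def nbrs (n : ℕ) (i : ℤ) : Finset ℤ :=
  (Finset.Icc (i - (2*(n:ℤ) - 1)) (i + (2*(n:ℤ) - 1))).filter (fun j => Odd (j - i))

/-- `φ` is a perfect `k`-coloring of `Ci_∞(D_n)` with parameter matrix `M`. -/
def PerfectK (n k : ℕ) (φ : ℤ → Fin k) (M : Fin k → Fin k → ℕ) : Prop :=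
  ∀ i j, ((nbrs n i).filter (fun x => φ x = j)).card = M (φ i) j

lemma nbrs_shift (n : ℕ) (hn : 0 < n) (j : ℤ) :
    insert (j + 2*(n:ℤ) + 1) (nbrs n j) = insert (j - (2*(n:ℤ) - 1)) (nbrs n (j + 2)) := by
  ext x
  simp only [nbrs, Finset.mem_insert, Finset.mem_filter, Finset.mem_Icc, Int.odd_iff]
  omega

lemma notmem1 (n : ℕ) (j : ℤ) : j + 2*(n:ℤ) + 1 ∉ nbrs n j := by
  simp only [nbrs, Finset.mem_filter, Finset.mem_Icc, Int.odd_iff]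
  omega

lemma notmem2 (n : ℕ) (j : ℤ) : j - (2*(n:ℤ) - 1) ∉ nbrs n (j + 2) := by
  simp only [nbrs, Finset.mem_filter, Finset.mem_Icc, Int.odd_iff]
  omega

lemma card_filter_insert (φ : ℤ → Fin 2) (a : ℤ) (s : Finset ℤ) (ha : a ∉ s) :
    ((insert a s).filter (fun x => φ x = 0)).card
      = (if φ a = 0 then 1 else 0) + (s.filter (fun x => φ x = 0)).card := by
  rw [Finset.filter_insert]
  split
  · rw [Finset.card_insert_of_notMem (fun h => ha (Finset.mem_of_mem_filter _ h))]
    omega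
  · simp

lemma key (n : ℕ) (hn : 0 < n) (φ : ℤ → Fin 2) (M : Fin 2 → Fin 2 → ℕ)
    (hφ : PerfectK n 2 φ M) (j : ℤ) :
    (if φ (j + 2*(n:ℤ) + 1) = 0 then 1 else 0) + M (φ j) 0
      = (if φ (j - (2*(n:ℤ) - 1)) = 0 then 1 else 0) + M (φ (j + 2)) 0 := by
  have h1 := card_filter_insert φ _ _ (notmem1 n j)
  have h2 := card_filter_insert φ _ _ (notmem2 n j)
  rw [nbrs_shift n hn j, h2, hφ j 0, hφ (j+2) 0] at h1
  omega

lemma fin2_of_ite (a b : Fin 2) (h : (if a = 0 then (1:ℕ) else 0) = (if b = 0 then 1 else 0)) :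
    a = b := by
  fin_cases a <;> fin_cases b <;> simp_all

lemma step_fwd (n : ℕ) (hn : 0 < n) (φ : ℤ → Fin 2) (M : Fin 2 → Fin 2 → ℕ)
    (hφ : PerfectK n 2 φ M) (j j' : ℤ)
    (h0 : φ j = φ j') (h2 : φ (j + 2) = φ (j' + 2))
    (hm : φ (j - (2*(n:ℤ) - 1)) = φ (j' - (2*(n:ℤ) - 1))) :
    φ (j + 2*(n:ℤ) + 1) = φ (j' + 2*(n:ℤ) + 1) := by
  have e1 := key n hn φ M hφ j
  have e2 := key n hn φ M hφ j'
  rw [h0, h2, hm] at e1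
  exact fin2_of_ite _ _ (by omega)

lemma step_bwd (n : ℕ) (hn : 0 < n) (φ : ℤ → Fin 2) (M : Fin 2 → Fin 2 → ℕ)
    (hφ : PerfectK n 2 φ M) (j j' : ℤ)
    (h0 : φ j = φ j') (h2 : φ (j + 2) = φ (j' + 2))
    (hp : φ (j + 2*(n:ℤ) + 1) = φ (j' + 2*(n:ℤ) + 1)) :
    φ (j - (2*(n:ℤ) - 1)) = φ (j' - (2*(n:ℤ) - 1)) := by
  have e1 := key n hn φ M hφ j
  have e2 := key n hn φ M hφ j'
  rw [h0, h2, hp] at e1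
  exact fin2_of_ite _ _ (by omega)

/-- Every perfect 2-coloring of `Ci_∞(D_n)` is periodic. -/
theorem perfect_two_coloring_periodic (n : ℕ) (hn : 0 < n)
    (φ : ℤ → Fin 2) (M : Fin 2 → Fin 2 → ℕ) (hφ : PerfectK n 2 φ M) :
    ∃ t : ℤ, 0 < t ∧ ∀ i : ℤ, φ (i + t) = φ i := by
  -- pigeonhole on windows of length 4n+1
  have hpig : ∃ a b : ℕ, a < b ∧
      ∀ i : ℤ, 0 ≤ i → i ≤ 4*n → φ ((a:ℤ) + i) = φ ((b:ℤ) + i) := by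
    obtain ⟨a, b, hab, hW⟩ := Finite.exists_ne_map_eq_of_infinite
      (fun (z : ℕ) (k : Fin (4*n+1)) => φ ((z:ℤ) + (k:ℤ)))
    have haux : ∀ a b : ℕ, (fun (k : Fin (4*n+1)) => φ ((a:ℤ) + (k:ℤ)))
        = (fun (k : Fin (4*n+1)) => φ ((b:ℤ) + (k:ℤ))) →
        ∀ i : ℤ, 0 ≤ i → i ≤ 4*n → φ ((a:ℤ) + i) = φ ((b:ℤ) + i) := by
      intro a b h i hi0 hi1
      have := congrFun h ⟨i.toNat, by omega⟩
      simpa [Int.toNat_of_nonneg hi0] using this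
    rcases lt_or_gt_of_ne hab with h | h
    · exact ⟨a, b, h, haux a b hW⟩
    · exact ⟨b, a, h, haux b a hW.symm⟩
  obtain ⟨a, b, hab, hbase'⟩ := hpig
  set t : ℤ := (b:ℤ) - (a:ℤ) with ht
  have hbase : ∀ i : ℤ, 0 ≤ i → i ≤ 4*n → φ ((a:ℤ) + i) = φ ((a:ℤ) + i + t) := by
    intro i h0 h1
    have := hbase' i h0 h1
    convert this using 2
    omega
  have fwd : ∀ k : ℕ, φ ((a:ℤ) + k) = φ ((a:ℤ) + k + t) := by
    intro k
    induction k using Nat.strong_induction_on with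
    | _ k IH =>
      by_cases hk : (k:ℤ) ≤ 4*n
      · exact hbase k (by positivity) hk
      · push_neg at hk
        have h1 := IH (k - (2*n+1)) (by omega)
        have h2 := IH (k - (2*n-1)) (by omega)
        have h3 := IH (k - 4*n) (by omega)
        have hs := step_fwd n hn φ M hφ ((a:ℤ) + k - (2*(n:ℤ)+1))
          ((a:ℤ) + k - (2*(n:ℤ)+1) + t)
          (by convert h1 using 2 <;> omega)
          (by convert h2 using 2 <;> omega)
          (by convert h3 using 2 <;> omega)
        convert hs using 2 <;> omega
  have bwd : ∀ k : ℕ, φ ((a:ℤ) - k) = φ ((a:ℤ) - k + t) := by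
    intro k
    induction k using Nat.strong_induction_on with
    | _ k IH =>
      have get : ∀ o : ℤ, -(k:ℤ) < o → φ ((a:ℤ) + o) = φ ((a:ℤ) + o + t) := by
        intro o ho
        rcases le_or_gt 0 o with h | h
        · have := fwd o.toNat
          convert this using 2 <;> omega
        · have := IH (-o).toNat (by omega)
          convert this using 2 <;> omega
      by_cases hk : k = 0
      · subst hk
        have := fwd 0
        convert this using 2 <;> omega
      · have h0 := get (2*(n:ℤ) - 1 - k) (by omega)
        have h2 := get (2*(n:ℤ) + 1 - k) (by omega)
        have hp := get (4*(n:ℤ) - k) (by omega)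
        have hs := step_bwd n hn φ M hφ ((a:ℤ) - k + (2*(n:ℤ) - 1))
          ((a:ℤ) - k + (2*(n:ℤ) - 1) + t)
          (by convert h0 using 2 <;> omega)
          (by convert h2 using 2 <;> omega)
          (by convert hp using 2 <;> omega)
        convert hs using 2 <;> omega
  refine ⟨t, by omega, ?_⟩
  intro i
  rcases le_or_gt (a:ℤ) i with h | h
  · have := fwd (i - a).toNat
    have e : φ i = φ (i + t) := by convert this using 2 <;> omega
    exact e.symm
  · have := bwd (a - i).toNat
    have e : φ i = φ (i + t) := by convert this using 2 <;> omega
    exact e.symm
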